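/- The NIG density f(x) = (α/π) exp(δ√(α²-β²) - βμ) φ(x)^{-1/2} K_1(δα φ(x)^{1/2}) e^{βx}, with φ(x) = 1 + ((x-μ)/δ)², is asymptotically equivalent as x → ∞ to C · x^{-3/2} e^{-(α-β)x} for an explicit positive constant C, provided α > β ≥ 0; in particular the NIG density is semi-heavy tailed. -/

import Mathlib

open MeasureTheory Real Filter

/-- Modified Bessel function of the third kind. -/
noncomputable def besselK (ν x : ℝ) : ℝ :=
  (1 / 2) * ∫ y in Set.Ioi (0 : ℝ), y ^ (ν - 1) * Real.exp (-x * (y + y⁻¹) / 2)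

noncomputable def Fb (x u : ℝ) : ℝ :=
  Set.indicator (Set.Ioi (-Real.sqrt x)) (fun u => Real.exp (-u^2 / (2 * (1 + u / Real.sqrt x)))) u

theorem sqrt_tendsto : Tendsto Real.sqrt atTop atTop := by
  refine tendsto_atTop_atTop.2 fun b => ⟨max (b^2) 0, fun a ha => ?_⟩
  have h1 : Real.sqrt (b^2) ≤ Real.sqrt a := Real.sqrt_le_sqrt ((le_max_left _ _).trans ha)
  rw [Real.sqrt_sq_eq_abs] at h1; exact (le_abs_self b).trans h1

noncomputable def bnd (u : ℝ) : ℝ :=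
  Real.exp (-(1/2) * u^2) + Set.indicator (Set.Ioi (0:ℝ)) (fun u => Real.exp (1/4) * Real.exp (-(1/4) * u)) u

theorem bnd_integrable : Integrable bnd := by
  refine (integrable_exp_neg_mul_sq (by norm_num : (0:ℝ) < 1/2)).add ?_
  rw [integrable_indicator_iff measurableSet_Ioi]
  exact ((exp_neg_integrableOn_Ioi 0 (by norm_num : (0:ℝ) < 1/4)).const_mul _)

theorem Fb_tendsto : Tendsto (fun x => ∫ u, Fb x u) atTop (nhds (Real.sqrt (2*π))) := by
  have hg : (∫ u : ℝ, Real.exp (-(1/2) * u^2)) = Real.sqrt (2*π) := by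
    rw [integral_gaussian]; norm_num [mul_comm]
  rw [← hg]
  refine MeasureTheory.tendsto_integral_filter_of_dominated_convergence bnd ?_ ?_ bnd_integrable ?_
  · filter_upwards with x
    refine (Measurable.indicator ?_ measurableSet_Ioi).aestronglyMeasurable
    measurability
  · filter_upwards [eventually_ge_atTop (1:ℝ)] with x hx1
    refine Filter.Eventually.of_forall fun u => ?_
    have hc1 : (1:ℝ) ≤ Real.sqrt x := by
      rw [show (1:ℝ) = Real.sqrt 1 by simp]; exact Real.sqrt_le_sqrt hx1
    set c := Real.sqrt x with hc
    have hc0 : (0:ℝ) < c := lt_of_lt_of_le one_pos hc1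
    have hbnd0 : 0 ≤ Set.indicator (Set.Ioi (0:ℝ)) (fun u => Real.exp (1/4) * Real.exp (-(1/4) * u)) u :=
      Set.indicator_nonneg (fun y _ => by positivity) u
    by_cases hm : u ∈ Set.Ioi (-c)
    · rw [Fb, Set.indicator_of_mem hm, Real.norm_eq_abs, abs_of_pos (Real.exp_pos _)]
      have hum : -c < u := hm
      have ht0 : 0 < 1 + u / c := by
        have : -1 < u / c := by
          rw [lt_div_iff₀ hc0]; linarith
        linarith
      rcases le_or_gt u 0 with hu0 | hu0
      · have hkey : -u^2 / (2*(1 + u/c)) ≤ -(1/2) * u^2 := by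
          rw [div_le_iff₀ (by positivity)]
          have htle : u / c ≤ 0 := div_nonpos_of_nonpos_of_nonneg hu0 hc0.le
          nlinarith [sq_nonneg u]
        calc Real.exp (-u^2 / (2*(1 + u/c))) ≤ Real.exp (-(1/2) * u^2) := Real.exp_le_exp.2 hkey
          _ ≤ bnd u := le_add_of_nonneg_right hbnd0
      · have htle : u / c ≤ u := by
          rw [div_le_iff₀ hc0]; nlinarith
        have hkey : -u^2 / (2*(1 + u/c)) ≤ 1/4 + -(1/4) * u := by
          rw [div_le_iff₀ (by positivity)]
          rcases le_or_gt u 1 with hu1 | hu1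
          · nlinarith [sq_nonneg u]
          · nlinarith [sq_nonneg u, mul_pos hu0 hu0]
        have : Real.exp (-u^2 / (2*(1 + u/c))) ≤ Real.exp (1/4) * Real.exp (-(1/4) * u) := by
          rw [← Real.exp_add]; exact Real.exp_le_exp.2 hkey
        refine this.trans ?_
        rw [bnd, Set.indicator_of_mem (Set.mem_Ioi.2 hu0)]
        exact le_add_of_nonneg_left (Real.exp_pos _).le
    · rw [Fb, Set.indicator_of_notMem hm]
      simp only [norm_zero, bnd]
      positivity
  · refine Filter.Eventually.of_forall fun u => ?_
    have hev : ∀ᶠ x : ℝ in atTop, -Real.sqrt x < u :=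
      (sqrt_tendsto.eventually_gt_atTop (-u)).mono (fun x h => by linarith [neg_lt_of_neg_lt h])
    have hlim : Tendsto (fun x : ℝ => -u^2 / (2 * (1 + u / Real.sqrt x))) atTop (nhds (-(1/2) * u^2)) := by
      have h0 : Tendsto (fun x : ℝ => u / Real.sqrt x) atTop (nhds 0) := by
        simp_rw [div_eq_mul_inv]
        simpa using (tendsto_const_nhds (x := u)).mul sqrt_tendsto.inv_tendsto_atTop
      have h2 : Tendsto (fun x : ℝ => 2 * (1 + u / Real.sqrt x)) atTop (nhds 2) := by
        have := (tendsto_const_nhds (x := (1:ℝ))).add h0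
        simpa using (tendsto_const_nhds (x := (2:ℝ))).mul this
      have := (tendsto_const_nhds (x := -u^2)).div h2 (by norm_num)
      rw [show -(1/2)*u^2 = -u^2/2 by ring]
      exact this
    refine Tendsto.congr' ?_ ((Real.continuous_exp.continuousAt).tendsto.comp hlim)
    filter_upwards [hev] with x hx
    simp only [Function.comp, Fb]
    rw [Set.indicator_of_mem (Set.mem_Ioi.2 (by linarith : -Real.sqrt x < u))]

theorem besselK_eq (x : ℝ) (hx : 0 < x) :
    besselK 1 x * Real.exp x * Real.sqrt x = (1/2) * ∫ u, Fb x u := by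
  set c := Real.sqrt x with hc
  have hc0 : 0 < c := Real.sqrt_pos.2 hx
  have hc2 : c^2 = x := Real.sq_sqrt hx.le
  have h1 : besselK 1 x = (1/2) * ∫ y in Set.Ioi (0:ℝ), Real.exp (-x * (y + y⁻¹) / 2) := by
    simp [besselK]
  rw [h1]
  have h2 : ((1:ℝ)/2) * (∫ y in Set.Ioi (0:ℝ), Real.exp (-x * (y + y⁻¹) / 2)) * Real.exp x * c
      = (1/2) * (c • ∫ y in Set.Ioi (0:ℝ), Real.exp x * Real.exp (-x * (y + y⁻¹) / 2)) := by
    rw [MeasureTheory.integral_const_mul]; simp; ring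
  rw [h2]
  congr 1
  have h3 : ∀ y, Real.exp x * Real.exp (-x * (y + y⁻¹) / 2) = Real.exp (x - x * (y + y⁻¹)/2) := by
    intro y; rw [← Real.exp_add]; ring_nf
  simp_rw [h3]
  set g : ℝ → ℝ := fun y => Real.exp (x - x * (y + y⁻¹)/2) with hg
  have h4 : ∫ y in Set.Ioi (0:ℝ), g y = ∫ u, Set.indicator (Set.Ioi (0:ℝ)) g u := by
    rw [MeasureTheory.integral_indicator measurableSet_Ioi]
  rw [h4]
  have h5 : ∫ u, Set.indicator (Set.Ioi (0:ℝ)) g u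
      = ∫ t, Set.indicator (Set.Ioi (0:ℝ)) g (t + 1) := by
    rw [integral_add_right_eq_self]
  rw [h5]
  have h6 : (∫ u : ℝ, Set.indicator (Set.Ioi (0:ℝ)) g (c⁻¹ * u + 1))
      = |c⁻¹⁻¹| • ∫ t, Set.indicator (Set.Ioi (0:ℝ)) g (t + 1) :=
    MeasureTheory.Measure.integral_comp_mul_left (fun t => Set.indicator (Set.Ioi (0:ℝ)) g (t + 1)) c⁻¹
  rw [abs_of_pos (by simpa using hc0)] at h6
  rw [inv_inv] at h6
  rw [← h6]
  congr 1
  ext u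
  by_cases hu : u ∈ Set.Ioi (-c)
  · have h1' : -1 < c⁻¹ * u := by
      have := mul_lt_mul_of_pos_left (Set.mem_Ioi.1 hu) (inv_pos.2 hc0)
      rwa [mul_neg, inv_mul_cancel₀ hc0.ne'] at this
    have hy : (0:ℝ) < c⁻¹ * u + 1 := by linarith
    rw [Set.indicator_of_mem (Set.mem_Ioi.2 hy), Fb, Set.indicator_of_mem hu]
    have h1u : 1 + u / c = c⁻¹ * u + 1 := by ring
    rw [h1u]
    have key : x - x * ((c⁻¹ * u + 1) + (c⁻¹ * u + 1)⁻¹)/2 = -u^2/(2*(c⁻¹ * u + 1)) := by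
      have hcu : c + u ≠ 0 := by
        have := Set.mem_Ioi.1 hu; intro h; rw [add_comm] at h; exact absurd (by linarith : u = -c) (by linarith)
      have hrw : c⁻¹ * u + 1 = (c + u)/c := by field_simp; ring
      rw [hrw, inv_div, ← hc2]
      field_simp
      ring
    rw [hg]
    simp only []
    rw [key]
  · have hu' : u ≤ -c := by simpa using hu
    have hy : c⁻¹ * u + 1 ∉ Set.Ioi (0:ℝ) := by
      simp only [Set.mem_Ioi, not_lt]
      have : c⁻¹ * u ≤ c⁻¹ * (-c) := mul_le_mul_of_nonneg_left hu' (inv_pos.2 hc0).le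
      rw [mul_neg, inv_mul_cancel₀ hc0.ne'] at this
      linarith
    rw [Set.indicator_of_notMem hy, Fb, Set.indicator_of_notMem hu]

theorem besselK_asymp : Tendsto (fun x => besselK 1 x * Real.exp x * Real.sqrt x) atTop (nhds (Real.sqrt (π/2))) := by
  have h := Fb_tendsto.const_mul (1/2 : ℝ)
  have h2 : (1/2:ℝ) * Real.sqrt (2*π) = Real.sqrt (π/2) := by
    rw [show 2*π = (π/2)*2^2 by ring, Real.sqrt_mul (by positivity), Real.sqrt_sq (by norm_num)]
    ring
  rw [h2] at h
  refine h.congr' ?_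
  filter_upwards [eventually_gt_atTop (0:ℝ)] with x hx
  exact (besselK_eq x hx).symm

/-- The NIG density is asymptotically `C * x^(-3/2) * exp (-(α-β)x)` as `x → ∞`,
for the explicit positive constant `C = √(α/(2π)) δ exp (δ√(α²-β²) - βμ + αμ)`;
in particular it is semi-heavy tailed. -/
theorem nig_density_tail (α β μ δ : ℝ) (hδ : 0 < δ) (hβ : 0 ≤ β) (hαβ : β < α) :
    Tendsto (fun x : ℝ =>
      (α / π * Real.exp (δ * Real.sqrt (α ^ 2 - β ^ 2) - β * μ) *
          (1 + ((x - μ) / δ) ^ 2) ^ (-(1 : ℝ) / 2) *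
          besselK 1 (δ * α * Real.sqrt (1 + ((x - μ) / δ) ^ 2)) * Real.exp (β * x)) /
        (Real.sqrt (α / (2 * π)) * δ *
          Real.exp (δ * Real.sqrt (α ^ 2 - β ^ 2) - β * μ + α * μ) *
          x ^ (-(3 : ℝ) / 2) * Real.exp (-(α - β) * x)))
      atTop (nhds 1) := by
  have hα : 0 < α := lt_of_le_of_lt hβ hαβ
  set r : ℝ → ℝ := fun x => Real.sqrt (δ^2 + (x-μ)^2) with hrdef
  have hr0 : ∀ x, 0 < r x := fun x => Real.sqrt_pos.2 (by positivity)
  have hr2 : ∀ x, (r x)^2 = δ^2 + (x-μ)^2 := fun x => Real.sq_sqrt (by positivity)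
  have hrge : ∀ x, x - μ ≤ r x := fun x => by
    calc x - μ ≤ |x - μ| := le_abs_self _
    _ = Real.sqrt ((x-μ)^2) := (Real.sqrt_sq_eq_abs _).symm
    _ ≤ r x := Real.sqrt_le_sqrt (by nlinarith [sq_nonneg δ])
  have hsub : Tendsto (fun x : ℝ => x - μ) atTop atTop := by
    simpa [sub_eq_add_neg] using tendsto_atTop_add_const_right atTop (-μ) tendsto_id
  have hrT : Tendsto r atTop atTop := tendsto_atTop_mono hrge hsub
  have hrt : Tendsto (fun x => α * r x) atTop atTop := hrT.const_mul_atTop hα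
  -- T1
  have hT1 : Tendsto (fun x => besselK 1 (α * r x) * Real.exp (α * r x) *
      Real.sqrt (α * r x) * Real.sqrt (2/π)) atTop (nhds 1) := by
    have h := (besselK_asymp.comp hrt).mul_const (Real.sqrt (2/π))
    have h1 : Real.sqrt (π/2) * Real.sqrt (2/π) = 1 := by
      rw [← Real.sqrt_mul (by positivity), show (π/2)*(2/π) = 1 by
        field_simp]
      exact Real.sqrt_one
    rw [h1] at h
    exact h
  -- T2
  have hA : Tendsto (fun x : ℝ => x^2/(δ^2+(x-μ)^2)) atTop (nhds 1) := by
    have hc : Continuous (fun t : ℝ => δ^2*t^2 + (1 - μ*t)^2) := by continuity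
    have h0 := (hc.tendsto 0).comp tendsto_inv_atTop_zero
    have h0' : Tendsto (fun x : ℝ => δ^2*(x⁻¹)^2 + (1 - μ*x⁻¹)^2) atTop (nhds 1) := by
      have : ((fun t : ℝ => δ^2*t^2 + (1 - μ*t)^2) ∘ fun x : ℝ => x⁻¹)
          = fun x : ℝ => δ^2*(x⁻¹)^2 + (1 - μ*x⁻¹)^2 := rfl
      rw [this] at h0
      convert h0 using 2
      norm_num
    have hAinv : Tendsto (fun x : ℝ => (δ^2+(x-μ)^2)/x^2) atTop (nhds 1) := by
      refine h0'.congr' ?_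
      filter_upwards [eventually_ne_atTop (0:ℝ)] with x hx
      field_simp
    have := hAinv.inv₀ one_ne_zero
    rw [inv_one] at this
    refine this.congr' ?_
    filter_upwards [eventually_ne_atTop (0:ℝ)] with x hx
    rw [inv_div]
  have hxr : Tendsto (fun x => x / r x) atTop (nhds 1) := by
    have hs : Tendsto (fun x : ℝ => Real.sqrt (x^2/(δ^2+(x-μ)^2))) atTop (nhds 1) := by
      have := (Real.continuous_sqrt.tendsto 1).comp hA
      simpa [Function.comp_def] using this
    refine hs.congr' ?_
    filter_upwards [eventually_gt_atTop (0:ℝ)] with x hx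
    rw [Real.sqrt_div (sq_nonneg x), Real.sqrt_sq hx.le]
  have hT2 : Tendsto (fun x => (x / r x) ^ ((3:ℝ)/2)) atTop (nhds 1) := by
    have := hxr.rpow_const (Or.inr (by norm_num : (0:ℝ) ≤ 3/2))
    simpa using this
  -- T3
  have hden : Tendsto (fun x => (x-μ) + r x) atTop atTop :=
    tendsto_atTop_mono (fun x => le_add_of_nonneg_right (hr0 x).le) hsub
  have hsr : Tendsto (fun x => (x - μ) - r x) atTop (nhds 0) := by
    have h := (tendsto_const_nhds (x := -δ^2)).div_atTop hden
    refine h.congr' ?_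
    filter_upwards [eventually_gt_atTop μ] with x hx
    have hpos : 0 < (x-μ) + r x := by have := hr0 x; linarith
    rw [div_eq_iff hpos.ne']
    nlinarith [hr2 x]
  have hT3 : Tendsto (fun x => Real.exp (α*((x-μ) - r x))) atTop (nhds 1) := by
    have h1 : Tendsto (fun x => α*((x-μ) - r x)) atTop (nhds 0) := by
      simpa using hsr.const_mul α
    have := (Real.continuous_exp.tendsto 0).comp h1
    simpa [Function.comp_def] using this
  have final := (hT1.mul hT2).mul hT3
  rw [show (1:ℝ)*1*1 = 1 by ring] at final
  refine final.congr' ?_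
  filter_upwards [eventually_gt_atTop (max μ 1)] with x hx
  have hxμ : μ < x := lt_of_le_of_lt (le_max_left _ _) hx
  have hx0 : (0:ℝ) < x := lt_of_lt_of_le one_pos (le_of_lt (lt_of_le_of_lt (le_max_right μ 1) hx))
  set R := r x with hR
  have hR0 : 0 < R := hr0 x
  have hφ : 1 + ((x-μ)/δ)^2 = (R/δ)^2 := by
    rw [div_pow, div_pow, hr2 x]; field_simp
  have hsq : Real.sqrt (1 + ((x-μ)/δ)^2) = R/δ := by
    rw [hφ, Real.sqrt_sq (by positivity)]
  have harg : δ * α * (R/δ) = α * R := by field_simp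
  have hpow : (1 + ((x-μ)/δ)^2 : ℝ) ^ (-(1:ℝ)/2) = δ/R := by
    rw [hφ, ← Real.rpow_natCast (R/δ) 2, ← Real.rpow_mul (by positivity)]
    norm_num
    rw [Real.rpow_neg_one, inv_div]
  have hx32pos : 0 < x ^ ((3:ℝ)/2) := Real.rpow_pos_of_pos hx0 _
  have hxpow : x ^ (-(3:ℝ)/2) = (x ^ ((3:ℝ)/2))⁻¹ := by
    rw [show -(3:ℝ)/2 = -((3:ℝ)/2) by norm_num, Real.rpow_neg hx0.le]
  have hdiv32 : (x / R) ^ ((3:ℝ)/2) = x ^ ((3:ℝ)/2) / R ^ ((3:ℝ)/2) :=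
    Real.div_rpow hx0.le hR0.le _
  have hR32 : R ^ ((3:ℝ)/2) = R * Real.sqrt R := by
    rw [show (3:ℝ)/2 = 1 + 1/2 by norm_num, Real.rpow_add hR0, Real.rpow_one,
      ← Real.sqrt_eq_rpow]
  rw [hsq, harg, hpow, hxpow, hdiv32, hR32]
  have hsasa : Real.sqrt α * Real.sqrt α = α := Real.mul_self_sqrt hα.le
  have hs23 : Real.sqrt (2/π) * Real.sqrt (α/(2*π)) = Real.sqrt α / π := by
    rw [← Real.sqrt_mul (by positivity), show (2/π)*(α/(2*π)) = α/π^2 by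
      field_simp, Real.sqrt_div hα.le, Real.sqrt_sq Real.pi_pos.le]
  have hsaR : Real.sqrt (α*R) = Real.sqrt α * Real.sqrt R := Real.sqrt_mul hα.le _
  have hsR0 : 0 < Real.sqrt R := Real.sqrt_pos.2 hR0
  have hs30 : 0 < Real.sqrt (α/(2*π)) := Real.sqrt_pos.2 (by positivity)
  have hkey : Real.sqrt α * Real.sqrt (2/π) = α/(π * Real.sqrt (α/(2*π))) := by
    rw [eq_div_iff (by positivity)]
    calc Real.sqrt α * Real.sqrt (2/π) * (π * Real.sqrt (α/(2*π)))
        = π * (Real.sqrt α * (Real.sqrt (2/π) * Real.sqrt (α/(2*π)))) := by ring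
      _ = π * (Real.sqrt α * (Real.sqrt α / π)) := by rw [hs23]
      _ = Real.sqrt α * Real.sqrt α := by field_simp
      _ = α := hsasa
  set K := besselK 1 (α*R) with hKdef
  set E0 := δ * Real.sqrt (α^2 - β^2) - β*μ with hE0
  rw [hsaR, show α*((x-μ) - R) = α*(x-μ) - α*R by ring, Real.exp_sub,
    Real.exp_add E0 (α*μ), show -(α-β)*x = β*x - α*x by ring, Real.exp_sub,
    show α*(x-μ) = α*x - α*μ by ring, Real.exp_sub]
  have hexp : Real.exp (α*x) * Real.exp (-(α*x) + x*β) = Real.exp (x*β) := by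
    rw [← Real.exp_add]; ring_nf
  have hpp : Real.sqrt π * Real.sqrt π = π := Real.mul_self_sqrt Real.pi_pos.le
  rw [Real.exp_sub (β*x) (α*x)]
  rw [show K * Real.exp (α*R) * (Real.sqrt α * Real.sqrt R) * Real.sqrt (2/π) = K * Real.exp (α*R) * Real.sqrt R * (Real.sqrt α * Real.sqrt (2/π)) by ring, hkey]
  field_simp
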